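/- Let w = u·a·v·b·Sym(u)·b be an element of F_n, where u·a is the principal prefix of w, and suppose v ≠ λ. Then v can be decomposed as v = v₁·a·v₂, where v₁ and v₂ are palindromes (v₂ possibly empty), and there exists t ≥ 0 such that u = v₂·(a·v)^t. -/

import Mathlib

/-- The two-letter alphabet {a, b}. -/
inductive Letter : Type
  | a : Letter
  | b : Letter
deriving DecidableEq, BEq, Repr

/-- Words over the alphabet {a, b}. -/
abbrev Word := List Letter

/-- δ(w) = |w|_a − |w|_b. -/
def delta (w : Word) : ℤ := (w.count Letter.a : ℤ) - (w.count Letter.b : ℤ)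

/-- A Dyck word: δ(w) = 0 and δ(p) ≥ 0 for every prefix p of w. -/
def IsDyck (w : Word) : Prop := delta w = 0 ∧ ∀ p : Word, p <+: w → 0 ≤ delta p

/-- Membership in D_n: w = d·b with d a Dyck word of length 2n. -/
def InD (n : ℕ) (w : Word) : Prop :=
  ∃ d : Word, IsDyck d ∧ d.length = 2 * n ∧ w = d ++ [Letter.b]

/-- Exchanging the letters a and b. -/
def Letter.flip : Letter → Letter
  | .a => .b
  | .b => .a

/-- The complement w̄ of a word w. -/
def comp (w : Word) : Word := w.map Letter.flip

/-- Sym(w): the complement of the mirror (reversal) of w. -/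
def sym (w : Word) : Word := comp w.reverse

/-- A palindrome: a word equal to its mirror. -/
def Palindrome (w : Word) : Prop := w.reverse = w

/-- w' is a conjugate of w: w = u·v and w' = v·u. -/
def Conj (w w' : Word) : Prop := ∃ u v : Word, w = u ++ v ∧ w' = v ++ u

/-- u is the principal prefix of w: the shortest prefix of w with δ(u) maximal. -/
def IsPrincipalPrefix (u w : Word) : Prop :=
  u <+: w ∧ (∀ p : Word, p <+: w → delta p ≤ delta u) ∧
    (∀ p : Word, p <+: w → delta p = delta u → u.length ≤ p.length)

/-- The graph of the map γ: writing w = u·v·b with u the principal prefix of w,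
    γ(w) = v̄·b·ū. -/
def GammaRel (w w' : Word) : Prop :=
  ∃ u v : Word, IsPrincipalPrefix u w ∧ w = u ++ v ++ [Letter.b] ∧
    w' = comp v ++ [Letter.b] ++ comp u

/-- F_n: the fixed points of γ in D_n. -/
def InF (n : ℕ) (w : Word) : Prop := InD n w ∧ GammaRel w w

/-- F_γ = ⋃_{n ≥ 1} F_n. -/
def InFgamma (w : Word) : Prop := ∃ n : ℕ, 1 ≤ n ∧ InF n w

/-- x^y: concatenation of the word x with itself y times. -/
def wpow (x : Word) : ℕ → Word
  | 0 => []
  | k + 1 => x ++ wpow x k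


/-! ### Auxiliary lemmas -/

lemma pf_flip_flip (c : Letter) : c.flip.flip = c := by cases c <;> rfl

lemma pf_comp_comp (w : Word) : comp (comp w) = w := by
  induction w with
  | nil => rfl
  | cons c w ih => simp [comp, pf_flip_flip] at *; exact ih

lemma pf_comp_append (x y : Word) : comp (x ++ y) = comp x ++ comp y :=
  List.map_append

lemma pf_comp_length (w : Word) : (comp w).length = w.length := List.length_map _

lemma pf_comp_inj {x y : Word} (h : comp x = comp y) : x = y := by
  rw [← pf_comp_comp x, h, pf_comp_comp]

lemma pf_comp_reverse (w : Word) : comp w.reverse = (comp w).reverse := by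
  simp [comp, List.map_reverse]

lemma pf_comp_nil : comp [] = [] := rfl

lemma pf_comp_a : comp [Letter.a] = [Letter.b] := rfl
lemma pf_comp_b : comp [Letter.b] = [Letter.a] := rfl

lemma pf_comp_singleton (c : Letter) : comp [c] = [c.flip] := rfl

lemma pf_comp_cons (c : Letter) (w : Word) : comp (c :: w) = c.flip :: comp w := rfl

lemma pf_flip_a : Letter.a.flip = Letter.b := rfl
lemma pf_flip_b : Letter.b.flip = Letter.a := rfl

lemma pf_comp_eq_self {w : Word} (h : comp w = w) : w = [] := by
  cases w with
  | nil => rfl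
  | cons c w =>
    exfalso
    have : c.flip = c := by
      have := congrArg (fun l => l.head?) h
      simpa [comp] using this
    cases c <;> simp [Letter.flip] at this

lemma pf_wpow_shift (t : ℕ) (p q : Word) :
    wpow (p ++ q) t ++ p = p ++ wpow (q ++ p) t := by
  induction t with
  | zero => simp [wpow]
  | succ t ih =>
    calc wpow (p ++ q) (t+1) ++ p = (p ++ q) ++ (wpow (p ++ q) t ++ p) := by
          simp [wpow]
      _ = (p ++ q) ++ (p ++ wpow (q ++ p) t) := by rw [ih]
      _ = p ++ wpow (q ++ p) (t+1) := by simp [wpow]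

lemma pf_pp_unique {u₁ u₂ w : Word} (h₁ : IsPrincipalPrefix u₁ w)
    (h₂ : IsPrincipalPrefix u₂ w) : u₁ = u₂ := by
  obtain ⟨hp₁, hmax₁, hmin₁⟩ := h₁
  obtain ⟨hp₂, hmax₂, hmin₂⟩ := h₂
  have hd : delta u₁ = delta u₂ := le_antisymm (hmax₂ _ hp₁) (hmax₁ _ hp₂)
  have hl : u₁.length = u₂.length :=
    le_antisymm (hmin₁ _ hp₂ hd.symm) (hmin₂ _ hp₁ hd)
  exact (List.prefix_of_prefix_length_le hp₁ hp₂ hl.le).eq_of_length hl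

lemma pf_cancel_last {X Y : Word} {c d : Letter} (h : X ++ [c] = Y ++ [d]) :
    X = Y ∧ c = d := by
  obtain ⟨h1, h2⟩ := List.append_inj' h rfl
  exact ⟨h1, by simpa using h2⟩

/-- Conjugacy lemma: if u·x = y·u with |x| = |y| and y ≠ [], then
    y = p·q, x = q·p and u = (pq)^t·p. -/
lemma pf_conj : ∀ (N : ℕ) (u x y : Word), u.length ≤ N → y ≠ [] →
    u ++ x = y ++ u → x.length = y.length →
    ∃ p q t, y = p ++ q ∧ x = q ++ p ∧ u = wpow (p ++ q) t ++ p := by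
  intro N
  induction N with
  | zero =>
    intro u x y hlen _ heq _
    have hu : u = [] := List.eq_nil_of_length_eq_zero (Nat.le_zero.mp hlen)
    subst hu
    refine ⟨[], y, 0, by simp, by simpa using heq, by simp [wpow]⟩
  | succ N ih =>
    intro u x y hlen hy heq hxy
    by_cases hc : u.length ≤ y.length
    · have hupfx : u <+: y := by
        have h1 : u <+: y ++ u := heq ▸ List.prefix_append u x
        exact List.prefix_of_prefix_length_le h1 (List.prefix_append y u) hc
      obtain ⟨s, hs⟩ := hupfx
      refine ⟨u, s, 0, hs.symm, ?_, by simp [wpow]⟩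
      have : u ++ x = u ++ (s ++ u) := by rw [heq, ← hs]; simp
      exact List.append_cancel_left this
    · push_neg at hc
      have hypfx : y <+: u := by
        have h1 : y <+: u ++ x := heq ▸ List.prefix_append y u
        exact List.prefix_of_prefix_length_le h1 (List.prefix_append u x) hc.le
      obtain ⟨u₁, hu₁⟩ := hypfx
      have hyne : 1 ≤ y.length := by
        cases y with
        | nil => exact absurd rfl hy
        | cons a l => simp
      have hlen₁ : u₁.length ≤ N := by
        have : u.length = y.length + u₁.length := by rw [← hu₁]; simp
        omega
      have heq₁ : u₁ ++ x = y ++ u₁ := by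
        have : y ++ (u₁ ++ x) = y ++ (y ++ u₁) := by
          calc y ++ (u₁ ++ x) = u ++ x := by rw [← hu₁]; simp
            _ = y ++ u := heq
            _ = y ++ (y ++ u₁) := by rw [← hu₁]
        exact List.append_cancel_left this
      obtain ⟨p, q, t, hpq, hqp, hu'⟩ := ih u₁ x y hlen₁ hy heq₁ hxy
      refine ⟨p, q, t + 1, hpq, hqp, ?_⟩
      calc u = y ++ u₁ := hu₁.symm
        _ = (p ++ q) ++ (wpow (p ++ q) t ++ p) := by rw [hpq, hu']
        _ = wpow (p ++ q) (t + 1) ++ p := by simp [wpow]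

def Peq (A y : Word) : Prop :=
  A ++ [Letter.a] ++ y = comp y ++ [Letter.b] ++ comp A

def Req (A s : Word) : Prop :=
  comp s ++ [Letter.a] ++ A = A ++ [Letter.a] ++ s

lemma pf_PR_uniq : ∀ (k : ℕ) (A : Word),
    (∀ y y', Peq A y → Peq A y' → y.length = k → y'.length = k → y = y') ∧
    (∀ s s', Req A s → Req A s' → s.length = k → s'.length = k → s = s') := by
  intro k
  induction k using Nat.strong_induction_on with
  | _ k ih =>
    intro A
    by_cases hk : k ≤ A.length
    · -- base case: comp of the unknown is a prefix of A, hence determined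
      have key : ∀ (z tail rest : Word), z.length = k → z ++ tail = A ++ rest →
          z = A.take k := by
        intro z tail rest hz h
        calc z = (z ++ tail).take k := (List.take_left' hz).symm
          _ = (A ++ rest).take k := by rw [h]
          _ = A.take k := List.take_append_of_le_length hk
      constructor
      · intro y y' h h' hl hl'
        have h0 : comp y ++ ([Letter.b] ++ comp A) = A ++ ([Letter.a] ++ y) := by
          simpa [Peq, List.append_assoc] using h.symm
        have h0' : comp y' ++ ([Letter.b] ++ comp A) = A ++ ([Letter.a] ++ y') := by
          simpa [Peq, List.append_assoc] using h'.symm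
        have e1 : comp y = A.take k := key _ _ _ (by rw [pf_comp_length, hl]) h0
        have e2 : comp y' = A.take k := key _ _ _ (by rw [pf_comp_length, hl']) h0'
        exact pf_comp_inj (e1.trans e2.symm)
      · intro s s' h h' hl hl'
        have h0 : comp s ++ ([Letter.a] ++ A) = A ++ ([Letter.a] ++ s) := by
          simpa [Req, List.append_assoc] using h
        have h0' : comp s' ++ ([Letter.a] ++ A) = A ++ ([Letter.a] ++ s') := by
          simpa [Req, List.append_assoc] using h'
        have e1 : comp s = A.take k := key _ _ _ (by rw [pf_comp_length, hl]) h0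
        have e2 : comp s' = A.take k := key _ _ _ (by rw [pf_comp_length, hl']) h0'
        exact pf_comp_inj (e1.trans e2.symm)
    · push_neg at hk
      have hklt : k - (A.length + 1) < k := by omega
      -- splitting helper
      have split : ∀ (z tail rest : Word), z.length = k →
          z ++ tail = (A ++ [Letter.a]) ++ rest →
          ∃ s, z = A ++ [Letter.a] ++ s ∧ s.length = k - (A.length + 1) := by
        intro z tail rest hz h
        have h1 : A.length + 1 ≤ z.length := by omega
        have htake : z.take (A.length + 1) = A ++ [Letter.a] := by
          calc z.take (A.length + 1)
              = (z ++ tail).take (A.length + 1) :=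
                (List.take_append_of_le_length h1).symm
            _ = ((A ++ [Letter.a]) ++ rest).take (A.length + 1) := by
                rw [h]
            _ = A ++ [Letter.a] := List.take_left' (by simp)
        refine ⟨z.drop (A.length + 1), ?_, ?_⟩
        · conv_lhs => rw [← List.take_append_drop (A.length + 1) z]
          rw [htake]
        · simp [hz]
      constructor
      · intro y y' h h' hl hl'
        -- reduce Peq to Req
        have red : ∀ yy, Peq A yy → yy.length = k →
            ∃ s, yy = comp A ++ [Letter.b] ++ comp s ∧
              s.length = k - (A.length + 1) ∧ Req A s := by
          intro yy hP hlen
          have h0 : comp yy ++ ([Letter.b] ++ comp A) = (A ++ [Letter.a]) ++ yy := by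
            simpa [Peq, List.append_assoc] using hP.symm
          obtain ⟨s, hys, hsl⟩ := split _ _ _ (by rw [pf_comp_length, hlen]) h0
          have hyy : yy = comp A ++ [Letter.b] ++ comp s := by
            have := congrArg comp hys
            rw [pf_comp_comp] at this
            rw [this]; simp [pf_comp_append, pf_comp_a, pf_comp_singleton,
              pf_comp_cons, pf_flip_a, pf_flip_b, List.append_assoc]
          refine ⟨s, hyy, hsl, ?_⟩
          -- substitute into hP and cancel A ++ [a]
          have hc : (A ++ [Letter.a]) ++ (comp A ++ ([Letter.b] ++ comp s)) =
              (A ++ [Letter.a]) ++ (s ++ ([Letter.b] ++ comp A)) := by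
            have lhs : A ++ [Letter.a] ++ yy = comp yy ++ [Letter.b] ++ comp A := hP
            rw [hyy] at lhs
            rw [show comp (comp A ++ [Letter.b] ++ comp s) = A ++ [Letter.a] ++ s by
              simp [pf_comp_append, pf_comp_comp, pf_comp_b, pf_comp_cons,
                pf_flip_a, pf_flip_b]] at lhs
            simpa [List.append_assoc] using lhs
          have hc2 : comp A ++ ([Letter.b] ++ comp s) = s ++ ([Letter.b] ++ comp A) :=
            List.append_cancel_left hc
          have hc3 := congrArg comp hc2
          simp only [pf_comp_append, pf_comp_comp, pf_comp_b] at hc3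
          unfold Req
          simpa [List.append_assoc] using hc3.symm
        obtain ⟨s, hy1, hl1, hR1⟩ := red y h hl
        obtain ⟨s', hy2, hl2, hR2⟩ := red y' h' hl'
        have : s = s' := ((ih _ hklt) A).2 s s' hR1 hR2 hl1 hl2
        rw [hy1, hy2, this]
      · intro s s' h h' hl hl'
        have red : ∀ ss, Req A ss → ss.length = k →
            ∃ r, ss = comp A ++ [Letter.b] ++ comp r ∧
              r.length = k - (A.length + 1) ∧ Peq A r := by
          intro ss hR hlen
          have h0 : comp ss ++ ([Letter.a] ++ A) = (A ++ [Letter.a]) ++ ss := by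
            simpa [Req, List.append_assoc] using hR
          obtain ⟨r, hsr, hrl⟩ := split _ _ _ (by rw [pf_comp_length, hlen]) h0
          have hss : ss = comp A ++ [Letter.b] ++ comp r := by
            have := congrArg comp hsr
            rw [pf_comp_comp] at this
            rw [this]; simp [pf_comp_append, pf_comp_a, pf_comp_singleton,
              pf_comp_cons, pf_flip_a, pf_flip_b, List.append_assoc]
          refine ⟨r, hss, hrl, ?_⟩
          have hc : (A ++ [Letter.a]) ++ (r ++ ([Letter.a] ++ A)) =
              (A ++ [Letter.a]) ++ (comp A ++ ([Letter.b] ++ comp r)) := by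
            have lhs : comp ss ++ [Letter.a] ++ A = A ++ [Letter.a] ++ ss := hR
            rw [hsr, hss] at lhs
            simpa [List.append_assoc] using lhs
          have hc2 : r ++ ([Letter.a] ++ A) = comp A ++ ([Letter.b] ++ comp r) :=
            List.append_cancel_left hc
          have hc3 := congrArg comp hc2
          simp only [pf_comp_append, pf_comp_comp, pf_comp_a] at hc3
          unfold Peq
          simpa [List.append_assoc, pf_comp_b] using hc3.symm
        obtain ⟨r, hs1, hl1, hP1⟩ := red s h hl
        obtain ⟨r', hs2, hl2, hP2⟩ := red s' h' hl'
        have : r = r' := ((ih _ hklt) A).1 r r' hP1 hP2 hl1 hl2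
        rw [hs1, hs2, this]


/-- Proposition (iv): for w = u·a·v·b·Sym(u)·b ∈ F_n with u·a its principal
    prefix and v ≠ λ, v decomposes as v = v₁·a·v₂ with v₁, v₂ palindromes
    (v₂ possibly empty), and u = v₂·(a·v)^t for some t ≥ 0. -/
theorem prop_form_iv (n : ℕ) (w u v : Word) (hw : InF n w)
    (hdec : w = u ++ [Letter.a] ++ v ++ [Letter.b] ++ sym u ++ [Letter.b])
    (hpp : IsPrincipalPrefix (u ++ [Letter.a]) w)
    (hv : v ≠ []) :
    ∃ v₁ v₂ : Word, ∃ t : ℕ,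
      v = v₁ ++ [Letter.a] ++ v₂ ∧ Palindrome v₁ ∧ Palindrome v₂ ∧
      u = v₂ ++ wpow ([Letter.a] ++ v) t := by
  classical
  obtain ⟨-, u₀, v₀, hpp₀, hw1, hw2⟩ := hw
  have hu₀ : u₀ = u ++ [Letter.a] := pf_pp_unique hpp₀ hpp
  subst hu₀
  -- identify v₀
  have hv₀ : v₀ = v ++ [Letter.b] ++ sym u := by
    have h1 : (u ++ [Letter.a]) ++ (v₀ ++ [Letter.b]) =
        (u ++ [Letter.a]) ++ ((v ++ [Letter.b] ++ sym u) ++ [Letter.b]) := by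
      simpa [List.append_assoc] using hw1.symm.trans hdec
    exact (pf_cancel_last (List.append_cancel_left h1)).1
  subst hv₀
  -- key equation and u palindrome
  have H : (u ++ [Letter.a] ++ v ++ [Letter.b]) ++ (comp u.reverse ++ [Letter.b]) =
      (comp v ++ [Letter.a] ++ u.reverse ++ [Letter.b]) ++ (comp u ++ [Letter.b]) := by
    have h := hdec.symm.trans hw2
    simpa [sym, pf_comp_append, pf_comp_comp, pf_comp_a, pf_comp_b,
      pf_comp_cons, pf_comp_singleton, pf_flip_a, pf_flip_b,
      List.append_assoc, pf_comp_nil] using h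
  obtain ⟨h3, h4⟩ := List.append_inj' H (by simp [pf_comp_length])
  have hupal : u.reverse = u := pf_comp_inj (pf_cancel_last h4).1
  have key : u ++ ([Letter.a] ++ v) = (comp v ++ [Letter.a]) ++ u := by
    have h5 := (pf_cancel_last h3).1
    rw [hupal] at h5
    simpa [List.append_assoc] using h5
  -- conjugacy decomposition, with q ≠ []
  obtain ⟨p, q, t, hpq, hqp, hu, hqne⟩ :
      ∃ p q t, comp v ++ [Letter.a] = p ++ q ∧ [Letter.a] ++ v = q ++ p ∧
        u = wpow (p ++ q) t ++ p ∧ q ≠ [] := by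
    obtain ⟨p, q, t, hpq, hqp, hu⟩ := pf_conj u.length u ([Letter.a] ++ v)
      (comp v ++ [Letter.a]) le_rfl (by simp) key
      (by simp [pf_comp_length, Nat.add_comm])
    by_cases hq : q = []
    · subst hq
      refine ⟨[], p, t + 1, by simpa using hpq, by simpa using hqp, ?_, ?_⟩
      · have h6 : u = wpow p t ++ p := by simpa using hu
        have h7 : wpow p t ++ p = p ++ wpow p t := by
          simpa using pf_wpow_shift t p []
        simp [wpow, h6, h7]
      · intro hp
        subst hp
        simp at hqp
    · exact ⟨p, q, t, hpq, hqp, hu, hq⟩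
  -- p is a palindrome
  have hshift : u = p ++ wpow (q ++ p) t := by rw [hu, pf_wpow_shift]
  have hppal : p.reverse = p := by
    have h11 : p ++ wpow (q ++ p) t =
        p.reverse ++ (wpow (p ++ q) t).reverse := by
      calc p ++ wpow (q ++ p) t = u := hshift.symm
        _ = u.reverse := hupal.symm
        _ = (wpow (p ++ q) t ++ p).reverse := by rw [← hu]
        _ = p.reverse ++ (wpow (p ++ q) t).reverse := by simp
    exact ((List.append_inj h11 (by simp)).1).symm
  -- analyze q : starts and ends with the letter a
  obtain ⟨c, q₂, rfl⟩ : ∃ c q₂, q = c :: q₂ := by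
    cases q with
    | nil => exact absurd rfl hqne
    | cons c q₂ => exact ⟨c, q₂, rfl⟩
  have h8 : Letter.a :: v = c :: (q₂ ++ p) := by simpa using hqp
  injection h8 with hc hv2
  subst hc
  have hq₂ : q₂ ≠ [] := by
    intro h9
    subst h9
    have hp : comp v = p := by simpa using hpq
    have hvp : v = p := by simpa using hv2
    exact hv (pf_comp_eq_self (hp.trans hvp.symm))
  obtain ⟨m, c', hm⟩ := (List.eq_nil_or_concat q₂).resolve_left hq₂
  rw [List.concat_eq_append] at hm
  subst hm
  have h10 : comp v ++ [Letter.a] = (p ++ [Letter.a] ++ m) ++ [c'] := by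
    simpa [List.append_assoc] using hpq
  obtain ⟨hcv, hc'⟩ := pf_cancel_last h10
  subst hc'
  have hv2' : v = m ++ [Letter.a] ++ p := by simpa [List.append_assoc] using hv2
  -- the word equation Peq p m
  have hPm : Peq p m := by
    unfold Peq
    have h12 := hcv
    rw [hv2'] at h12
    simp only [pf_comp_append, pf_comp_singleton, pf_flip_a] at h12
    simpa [List.append_assoc] using h12.symm
  -- the mirrored equation Peq p m.reverse
  have hPmr : Peq p m.reverse := by
    have h13 : m.reverse ++ ([Letter.a] ++ p) =
        comp p ++ ([Letter.b] ++ comp m.reverse) := by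
      have h := congrArg List.reverse hPm
      unfold Peq at h
      simp only [List.reverse_append, List.reverse_singleton,
        ← pf_comp_reverse, hupal, hppal] at h
      simpa [List.append_assoc] using h
    have h14 := congrArg comp h13
    simp only [pf_comp_append, pf_comp_comp, pf_comp_singleton,
      pf_flip_a, pf_flip_b] at h14
    unfold Peq
    simpa [List.append_assoc] using h14.symm
  have hmpal : m.reverse = m :=
    (pf_PR_uniq m.length p).1 m.reverse m hPmr hPm (by simp) rfl
  refine ⟨m, p, t, hv2', hmpal, hppal, ?_⟩
  rw [hqp]
  exact hshift
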